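/- Let G be a topological group isomorphically embedded in a product Π of topological groups such that G is z-embedded in Π and Π is ℝ-factorizable, each factor being second-countable. Then every cozero subset of G is the trace on G of a cozero subset of Π that depends on countably many coordinates, i.e., there is a countable set B of coordinates and a cozero set W of the subproduct with U = G ∩ π_B⁻¹(W). -/

import Mathlib

/-- A cozero set: the set of points where some continuous real-valued function
is nonzero. -/
def IsCozero {X : Type*} [TopologicalSpace X] (S : Set X) : Prop :=
  ∃ f : X → ℝ, Continuous f ∧ S = {x | f x ≠ 0}

/-- A factorization of a continuous real-valued function on a topological group
through a continuous surjective homomorphism onto a second-countable topological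
group. -/
structure RFactorization (H : Type*) [TopologicalSpace H] [Group H] (f : H → ℝ) where
  K : Type
  [grp : Group K]
  [top : TopologicalSpace K]
  [tg : @IsTopologicalGroup K top grp]
  [sc : @SecondCountableTopology K top]
  p : H → K
  hom : ∀ x y : H, p (x * y) = @HMul.hMul K K K (@instHMul K grp.toMul) (p x) (p y)
  cont : @Continuous H K _ top p
  surj : Function.Surjective p
  h : K → ℝ
  hcont : @Continuous K ℝ top _ h
  fact : f = h ∘ p

/-- A topological group is ℝ-factorizable if every continuous real-valued
function on it factors through a continuous homomorphism onto a second-countable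
topological group. -/
def IsRFactorizable (H : Type*) [TopologicalSpace H] [Group H] : Prop :=
  ∀ f : H → ℝ, Continuous f → Nonempty (RFactorization H f)

/-- If a topological group `G` is a subgroup of a product
`Π = ∏ G_α` of second-countable topological groups, `G` is z-embedded in `Π`,
and `Π` is ℝ-factorizable, then every cozero subset of `G` is the trace on `G`
of a cozero set of `Π` depending on countably many coordinates: there are a
countable set `B` of coordinates and a cozero set `W` of the subproduct with
`U = G ∩ π_B⁻¹(W)`. -/
theorem cozero_depends_on_countably_many_coordinates
    {Γ : Type*} (Gf : Γ → Type*) [∀ α, Group (Gf α)] [∀ α, TopologicalSpace (Gf α)]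
    [∀ α, IsTopologicalGroup (Gf α)] [∀ α, SecondCountableTopology (Gf α)]
    (G : Subgroup (∀ α, Gf α))
    (hz : ∀ U : Set G, IsCozero U →
      ∃ W : Set (∀ α, Gf α), IsCozero W ∧ (Subtype.val ⁻¹' W : Set G) = U)
    (hRf : IsRFactorizable (∀ α, Gf α))
    (U : Set G) (hU : IsCozero U) :
    ∃ B : Set Γ, B.Countable ∧
      ∃ W : Set (∀ α : B, Gf α), IsCozero W ∧
        U = {g : G | (fun α : B => (g : ∀ α, Gf α) α) ∈ W} := by
  classical
  obtain ⟨W0, ⟨f, hf, hW0⟩, htrace⟩ := hz U hU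
  obtain ⟨F⟩ := hRf f hf
  letI := F.grp
  letI := F.top
  letI := F.tg
  letI := F.sc
  -- p 1 = 1
  have p1 : F.p 1 = 1 := by
    have := F.hom 1 1
    rw [one_mul] at this
    exact left_eq_mul.mp this
  -- countable antitone basis of 𝓝 (1 : K)
  obtain ⟨V, hV⟩ := (nhds (1 : F.K)).exists_antitone_basis
  -- for each n, p ⁻¹' (V n) is a nbhd of 1 in the product, get an open set and a finite box
  have hmem : ∀ n : ℕ, F.p ⁻¹' (V n) ∈ nhds (1 : ∀ α, Gf α) := by
    intro n
    have hv : V n ∈ nhds (1 : F.K) := hV.1.mem_of_mem trivial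
    have hc := F.cont.continuousAt (x := (1 : ∀ α, Gf α))
    rw [ContinuousAt, p1] at hc
    exact hc hv
  have hbox : ∀ n : ℕ, ∃ (I : Finset Γ) (u : ∀ a, Set (Gf a)),
      (∀ a ∈ I, IsOpen (u a) ∧ (1 : ∀ α, Gf α) a ∈ u a) ∧
      (I : Set Γ).pi u ⊆ F.p ⁻¹' (V n) := by
    intro n
    obtain ⟨O, hOsub, hOopen, hO1⟩ := mem_nhds_iff.mp (hmem n)
    obtain ⟨I, u, h1, h2⟩ := isOpen_pi_iff.mp hOopen 1 hO1
    exact ⟨I, u, h1, h2.trans hOsub⟩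
  choose I u hIu hsub using hbox
  set B : Set Γ := ⋃ n, (I n : Set Γ) with hB
  have hBc : B.Countable := Set.countable_iUnion fun n => (I n).countable_toSet
  -- f depends only on coordinates in B
  have key : ∀ x y : (∀ α, Gf α), (∀ α ∈ B, x α = y α) → f x = f y := by
    intro x y hxy
    set k : F.K := F.p (x * y⁻¹) with hk
    have hkmem : ∀ n, k ∈ V n := by
      intro n
      apply hsub n
      intro a ha
      have : x a = y a := hxy a (Set.mem_iUnion.mpr ⟨n, ha⟩)
      have : (x * y⁻¹) a = (1 : ∀ α, Gf α) a := by
        simp [this]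
      rw [this]
      exact (hIu n a ha).2
    -- k specializes to 1
    have hks : k ⤳ (1 : F.K) := by
      rw [specializes_iff_pure]
      intro s hs
      obtain ⟨n, _, hn⟩ := hV.1.mem_iff.mp hs
      exact hn (hkmem n)
    -- hence k * p y ⤳ p y
    have hmul : (k * F.p y) ⤳ F.p y := by
      have := (hks.prod (specializes_rfl (x := F.p y))).map
        (continuous_mul : Continuous fun q : F.K × F.K => q.1 * q.2)
      simpa using this
    have hpx : F.p x = k * F.p y := by
      have := F.hom (x * y⁻¹) y
      rw [inv_mul_cancel_right] at this
      exact this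
    have : F.h (k * F.p y) = F.h (F.p y) := (hmul.map F.hcont).eq
    calc f x = F.h (F.p x) := congrFun F.fact x
      _ = F.h (k * F.p y) := by rw [hpx]
      _ = F.h (F.p y) := this
      _ = f y := (congrFun F.fact y).symm
  -- extension map from the subproduct
  set e : (∀ α : B, Gf α) → (∀ α, Gf α) :=
    fun w α => if h : α ∈ B then w ⟨α, h⟩ else 1 with he
  have hecont : Continuous e := by
    apply continuous_pi
    intro α
    by_cases hα : α ∈ B
    · simpa [he, hα] using continuous_apply (⟨α, hα⟩ : B)
    · simpa [he, hα] using continuous_const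
  refine ⟨B, hBc, {w | f (e w) ≠ 0}, ⟨f ∘ e, hf.comp hecont, rfl⟩, ?_⟩
  ext g
  have hag : f ((g : ∀ α, Gf α)) = f (e fun α : B => (g : ∀ α, Gf α) α) := by
    apply key
    intro α hα
    simp [he, hα]
  constructor
  · intro hg
    have : (g : ∀ α, Gf α) ∈ W0 := by
      rw [← htrace] at hg; exact hg
    rw [hW0] at this
    simpa [Set.mem_setOf_eq, ← hag] using this
  · intro hg
    rw [← htrace]
    show (g : ∀ α, Gf α) ∈ W0
    rw [hW0]
    simpa [Set.mem_setOf_eq, ← hag] using hg
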